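/- arXiv:1907.11718 — 3 statements merged into one kernel-verified Lean document; each statement's English description precedes it below -/
import Mathlib

section
/- For fixed (t,x) ∈ [0,T]×ℝ and fixed w,z ∈ ℝ, the difference V(t,x) - V^{cl}(t,x) between the exploratory optimal value function V(t,x) = (x-w)²e^{-ρᵀρ(T-t)} + (λd/4)ρᵀρ(T²-t²) - (λd/2)(ρᵀρT - (1/d)ln(|σᵀσ|/(πλ)))(T-t) - (w-z)² and the classical value function V^{cl}(t,x) = (x-w)²e^{-ρᵀρ(T-t)} - (w-z)² tends to 0 as λ → 0⁺. -/
open Matrix Real Filter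

lemma mul_log_tendsto : Tendsto (fun lam : ℝ => Real.log lam * lam)
    (nhdsWithin 0 (Set.Ioi 0)) (nhds 0) := by
  simpa using tendsto_log_mul_rpow_nhdsGT_zero one_pos

/-- The difference between the exploratory optimal value function and the classical one
tends to `0` as the exploration weight `λ → 0⁺`. -/
theorem stmt6 {d : ℕ} (hd : 0 < d) (T t x w z : ℝ) (hT : 0 < T) (ht : t ∈ Set.Icc 0 T)
    (ρ : Fin d → ℝ) (σ : Matrix (Fin d) (Fin d) ℝ) (hσ : IsUnit σ.det) :
    Tendsto (fun lam : ℝ =>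
        ((x - w)^2 * Real.exp (-(ρ ⬝ᵥ ρ) * (T - t))
          + (lam * (d : ℝ) / 4) * (ρ ⬝ᵥ ρ) * (T^2 - t^2)
          - (lam * (d : ℝ) / 2) *
              ((ρ ⬝ᵥ ρ) * T - (1 / (d : ℝ)) * Real.log ((σᵀ * σ).det / (Real.pi * lam)))
              * (T - t)
          - (w - z)^2)
        - ((x - w)^2 * Real.exp (-(ρ ⬝ᵥ ρ) * (T - t)) - (w - z)^2))
      (nhdsWithin 0 (Set.Ioi 0)) (nhds 0) := by
  have hd' : (d : ℝ) ≠ 0 := Nat.cast_ne_zero.mpr hd.ne'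
  set c : ℝ := (σᵀ * σ).det with hc
  set C1 : ℝ := ((d : ℝ) / 4) * (ρ ⬝ᵥ ρ) * (T^2 - t^2)
      - ((d : ℝ) / 2) * ((ρ ⬝ᵥ ρ) * T) * (T - t)
      + (1 / 2) * (Real.log c - Real.log Real.pi) * (T - t) with hC1
  set C2 : ℝ := -(1 / 2) * (T - t) with hC2
  have base : Tendsto (fun lam : ℝ => lam * C1 + (Real.log lam * lam) * C2)
      (nhdsWithin 0 (Set.Ioi 0)) (nhds 0) := by
    have h1 : Tendsto (fun lam : ℝ => lam * C1) (nhdsWithin 0 (Set.Ioi 0)) (nhds 0) := by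
      have : Tendsto (fun lam : ℝ => lam) (nhdsWithin 0 (Set.Ioi 0)) (nhds 0) :=
        tendsto_id.mono_left nhdsWithin_le_nhds
      simpa using this.mul_const C1
    have h2 := mul_log_tendsto.mul_const C2
    simpa using h1.add h2
  refine base.congr' ?_ |>.mono_left (le_refl _)
  filter_upwards [self_mem_nhdsWithin] with lam (hlam : 0 < lam)
  have hπ : (0:ℝ) < Real.pi := Real.pi_pos
  have hcpos : (0:ℝ) < c := by
    have h2 : c = σ.det ^ 2 := by rw [hc, Matrix.det_mul, Matrix.det_transpose, sq]
    rw [h2]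
    have h3 : σ.det ≠ 0 := hσ.ne_zero
    positivity
  have hlog : Real.log (c / (Real.pi * lam))
      = Real.log c - Real.log Real.pi - Real.log lam := by
    rw [Real.log_div hcpos.ne' (by positivity), Real.log_mul hπ.ne' hlam.ne']
    ring
  rw [hlog, hC1, hC2]
  field_simp
  ring
end

section
/- The function ω(t,x) = (x-w)² e^{-ρᵀρ(T-t)} - (w-z)² solves the HJB equation ω_t(t,x) + min_{u ∈ ℝ^d} (½ uᵀσᵀσu · ω_{xx}(t,x) + ρᵀσu · ω_x(t,x)) = 0 on [0,T)×ℝ with terminal condition ω(T,x) = (x-w)² - (w-z)², and the minimum in u is attained at u*(t,x) = -σ⁻¹ρ(x-w). -/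
open Matrix Real

lemma dot_self_nonneg' {d : ℕ} (v : Fin d → ℝ) : 0 ≤ v ⬝ᵥ v :=
  Finset.sum_nonneg fun i _ => mul_self_nonneg (v i)

/-- `ω(t,x) = (x-w)² e^{-ρᵀρ(T-t)} - (w-z)²` solves the classical MV HJB equation,
with the inner minimum over `u ∈ ℝ^d` attained at `u*(t,x) = -σ⁻¹ρ(x-w)`. -/
theorem stmt7 {d : ℕ} (T w z : ℝ) (hT : 0 < T)
    (ρ : Fin d → ℝ) (σ : Matrix (Fin d) (Fin d) ℝ) (hσ : IsUnit σ.det)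
    (ω : ℝ → ℝ → ℝ)
    (hω : ∀ t x : ℝ, ω t x = (x - w)^2 * Real.exp (-(ρ ⬝ᵥ ρ) * (T - t)) - (w - z)^2) :
    (∀ x : ℝ, ω T x = (x - w)^2 - (w - z)^2) ∧
    (∀ t ∈ Set.Ico (0:ℝ) T, ∀ x : ℝ,
      (∀ u : Fin d → ℝ,
        (1/2) * (((-(x - w)) • (σ⁻¹ *ᵥ ρ)) ⬝ᵥ ((σᵀ * σ) *ᵥ ((-(x - w)) • (σ⁻¹ *ᵥ ρ))))
            * deriv (fun y => deriv (fun y' => ω t y') y) x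
          + (ρ ⬝ᵥ (σ *ᵥ ((-(x - w)) • (σ⁻¹ *ᵥ ρ)))) * deriv (fun y => ω t y) x
        ≤ (1/2) * (u ⬝ᵥ ((σᵀ * σ) *ᵥ u)) * deriv (fun y => deriv (fun y' => ω t y') y) x
          + (ρ ⬝ᵥ (σ *ᵥ u)) * deriv (fun y => ω t y) x) ∧
      deriv (fun s => ω s x) t
        + ((1/2) * (((-(x - w)) • (σ⁻¹ *ᵥ ρ)) ⬝ᵥ ((σᵀ * σ) *ᵥ ((-(x - w)) • (σ⁻¹ *ᵥ ρ))))
            * deriv (fun y => deriv (fun y' => ω t y') y) x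
          + (ρ ⬝ᵥ (σ *ᵥ ((-(x - w)) • (σ⁻¹ *ᵥ ρ)))) * deriv (fun y => ω t y) x) = 0) := by
  set a : ℝ := ρ ⬝ᵥ ρ with ha
  -- spatial first derivative
  have h1 : ∀ t x : ℝ, HasDerivAt (fun y => ω t y)
      (2 * (x - w) * Real.exp (-a * (T - t))) x := by
    intro t x
    have h : HasDerivAt (fun y : ℝ => (y - w)^2 * Real.exp (-a * (T - t)) - (w - z)^2)
        (2 * (x - w) * Real.exp (-a * (T - t))) x := by
      have := (((hasDerivAt_id x).sub_const w).pow 2).mul_const (Real.exp (-a * (T - t)))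
      simpa [mul_comm, mul_assoc] using this.sub_const ((w - z)^2)
    exact h.congr_of_eventuallyEq (Filter.Eventually.of_forall fun y => by simp only [hω])
  have hd1 : ∀ t x : ℝ, deriv (fun y => ω t y) x
      = 2 * (x - w) * Real.exp (-a * (T - t)) := fun t x => (h1 t x).deriv
  -- spatial second derivative
  have hd2 : ∀ t x : ℝ, deriv (fun y => deriv (fun y' => ω t y') y) x
      = 2 * Real.exp (-a * (T - t)) := by
    intro t x
    have : (fun y => deriv (fun y' => ω t y') y)
        = fun y => 2 * (y - w) * Real.exp (-a * (T - t)) := funext fun y => hd1 t y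
    rw [this]
    have : HasDerivAt (fun y : ℝ => 2 * (y - w) * Real.exp (-a * (T - t)))
        (2 * Real.exp (-a * (T - t))) x := by
      have := (((hasDerivAt_id x).sub_const w).const_mul 2).mul_const
        (Real.exp (-a * (T - t)))
      simpa using this
    exact this.deriv
  -- time derivative
  have hdt : ∀ t x : ℝ, deriv (fun s => ω s x) t
      = (x - w)^2 * (a * Real.exp (-a * (T - t))) := by
    intro t x
    have hinner : HasDerivAt (fun s : ℝ => -a * (T - s)) a t := by
      simpa using ((hasDerivAt_id t).const_sub T).const_mul (-a)
    have h : HasDerivAt (fun s : ℝ => (x - w)^2 * Real.exp (-a * (T - s)) - (w - z)^2)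
        ((x - w)^2 * (a * Real.exp (-a * (T - t)))) t := by
      have := (hinner.exp.const_mul ((x - w)^2)).sub_const ((w - z)^2)
      simpa [mul_comm, mul_assoc] using this
    exact (h.congr_of_eventuallyEq
      (Filter.Eventually.of_forall fun s => by simp only [hω])).deriv
  -- algebra with dot products
  have key : ∀ u : Fin d → ℝ, u ⬝ᵥ ((σᵀ * σ) *ᵥ u) = (σ *ᵥ u) ⬝ᵥ (σ *ᵥ u) := by
    intro u
    rw [← Matrix.mulVec_mulVec, Matrix.dotProduct_mulVec, Matrix.vecMul_transpose]
  have hσinv : ∀ c : ℝ, σ *ᵥ (c • (σ⁻¹ *ᵥ ρ)) = c • ρ := by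
    intro c
    rw [Matrix.mulVec_smul, Matrix.mulVec_mulVec, Matrix.mul_nonsing_inv σ hσ,
      Matrix.one_mulVec]
  refine ⟨fun x => by simp [hω], fun t _ x => ?_⟩
  set s : ℝ := x - w with hs
  set E : ℝ := Real.exp (-a * (T - t)) with hE
  have hEpos : 0 < E := Real.exp_pos _
  have hstar1 : ((-s) • (σ⁻¹ *ᵥ ρ)) ⬝ᵥ ((σᵀ * σ) *ᵥ ((-s) • (σ⁻¹ *ᵥ ρ))) = s^2 * a := by
    rw [key, hσinv]
    simp [smul_dotProduct, dotProduct_smul, ha]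
    ring
  have hstar2 : ρ ⬝ᵥ (σ *ᵥ ((-s) • (σ⁻¹ *ᵥ ρ))) = -s * a := by
    rw [hσinv]
    simp [dotProduct_smul, ha]
  constructor
  · intro u
    rw [hd1, hd2, hstar1, hstar2, key]
    set v : Fin d → ℝ := σ *ᵥ u with hv
    have hnn : 0 ≤ (v + s • ρ) ⬝ᵥ (v + s • ρ) := dot_self_nonneg' _
    have hexp : (v + s • ρ) ⬝ᵥ (v + s • ρ)
        = v ⬝ᵥ v + 2 * s * (ρ ⬝ᵥ v) + s^2 * a := by
      simp [add_dotProduct, dotProduct_add, smul_dotProduct,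
        dotProduct_smul, dotProduct_comm v ρ, ha]
      ring
    have h0 : 0 ≤ (v ⬝ᵥ v + 2 * s * (ρ ⬝ᵥ v) + s^2 * a) * E := by
      rw [← hexp]; exact mul_nonneg hnn hEpos.le
    rw [← hs, ← hE]
    ring_nf at h0 ⊢
    linarith [h0]
  · rw [hdt, hd1, hd2, hstar1, hstar2]
    ring
end

section
/- Let α ∈ ℝ^d with 2ρᵀσα + |σα|² = -ρᵀρ (equivalently α = -σ⁻¹ρ). Then applying the policy improvement scheme to the Gaussian policy π₁ with mean -σ⁻¹ρ(x-w) and value function V^{π₁}(t,x) = (x-w)²e^{-ρᵀρ(T-t)} + F₁(t) yields the policy with mean -σ⁻¹ρ(x-w) and covariance (σᵀσ)⁻¹(λ/2)e^{ρᵀρ(T-t)}; i.e., the optimal Gaussian policy is a fixed point of the improvement map π ↦ N(-σ⁻¹ρ V_x/V_{xx}, (σᵀσ)⁻¹λ/V_{xx}). -/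
open Matrix Real

/-- The multivariate Gaussian density `N(u | β, S)` on `ℝ^d`. -/
noncomputable def gaussianDensityFn {d : ℕ} (β : Fin d → ℝ)
    (S : Matrix (Fin d) (Fin d) ℝ) (u : Fin d → ℝ) : ℝ :=
  ((2 * Real.pi) ^ d * S.det) ^ (-(1:ℝ)/2) *
    Real.exp (-(1/2) * ((u - β) ⬝ᵥ (S⁻¹ *ᵥ (u - β))))

lemma deriv_quad (w c f : ℝ) (x : ℝ) :
    deriv (fun y => (y - w)^2 * c + f) x = 2 * (x - w) * c := by
  have h : HasDerivAt (fun y => (y - w)^2 * c + f) (2 * (x - w) * c) x := by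
    have h1 : HasDerivAt (fun y : ℝ => y - w) 1 x := (hasDerivAt_id x).sub_const w
    have h2 := ((h1.pow 2).mul_const c).add_const f
    exact h2.congr_deriv (by ring)
  exact h.deriv

/-- The optimal Gaussian policy is a fixed point of the policy improvement map
`π ↦ N(-σ⁻¹ρ V_x/V_{xx}, (σᵀσ)⁻¹ λ/V_{xx})`: applying the improvement scheme to a
Gaussian policy with value function `V(t,x) = (x-w)²e^{-ρᵀρ(T-t)} + F₁(t)` yields the
policy with mean `-σ⁻¹ρ(x-w)` and covariance `(σᵀσ)⁻¹(λ/2)e^{ρᵀρ(T-t)}`. -/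
theorem stmt13 {d : ℕ} (T lam w : ℝ) (hT : 0 < T) (hlam : 0 < lam)
    (ρ : Fin d → ℝ) (σ : Matrix (Fin d) (Fin d) ℝ) (hσ : IsUnit σ.det)
    (α : Fin d → ℝ) (hα : α = -(σ⁻¹ *ᵥ ρ))
    (F₁ : ℝ → ℝ) (V : ℝ → ℝ → ℝ)
    (hV : ∀ t x : ℝ, V t x = (x - w)^2 * Real.exp (-(ρ ⬝ᵥ ρ) * (T - t)) + F₁ t) :
    ∀ t x : ℝ,
      gaussianDensityFn
          ((-(deriv (fun y => V t y) x / deriv (fun y => deriv (fun y' => V t y') y) x))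
            • (σ⁻¹ *ᵥ ρ))
          ((lam / deriv (fun y => deriv (fun y' => V t y') y) x) • (σᵀ * σ)⁻¹) =
        gaussianDensityFn ((-(x - w)) • (σ⁻¹ *ᵥ ρ))
          ((lam / 2 * Real.exp ((ρ ⬝ᵥ ρ) * (T - t))) • (σᵀ * σ)⁻¹) := by
  intro t x
  set c := Real.exp (-(ρ ⬝ᵥ ρ) * (T - t)) with hc
  have hcpos : 0 < c := Real.exp_pos _
  have h1 : (fun y => V t y) = fun y => (y - w)^2 * c + F₁ t := by
    funext y; exact hV t y
  have hd1 : ∀ y, deriv (fun y' => V t y') y = 2 * (y - w) * c := by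
    intro y; rw [h1]; exact deriv_quad w c (F₁ t) y
  have hd2 : deriv (fun y => deriv (fun y' => V t y') y) x = 2 * c := by
    have : (fun y => deriv (fun y' => V t y') y) = fun y => 2 * (y - w) * c := by
      funext y; exact hd1 y
    rw [this]
    have h : HasDerivAt (fun y : ℝ => 2 * (y - w) * c) (2 * c) x := by
      have h1' : HasDerivAt (fun y : ℝ => y - w) 1 x := (hasDerivAt_id x).sub_const w
      have h2 := (h1'.const_mul 2).mul_const c
      exact h2.congr_deriv (by ring)
    exact h.deriv
  rw [hd1 x, hd2]
  have hinv : c * Real.exp ((ρ ⬝ᵥ ρ) * (T - t)) = 1 := by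
    rw [hc, ← Real.exp_add]; ring_nf; exact Real.exp_zero
  have e1 : -(2 * (x - w) * c / (2 * c)) = -(x - w) := by
    field_simp
  have e2 : lam / (2 * c) = lam / 2 * Real.exp ((ρ ⬝ᵥ ρ) * (T - t)) := by
    field_simp
    nlinarith [hinv]
  rw [e1, e2]
end
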